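/- If conditions M(λ_n) and S(λ_n) hold (with constant τ from condition S), then for every τ̃ > τ there exists n_{τ̃} such that for all n > n_{τ̃} and all s, t ∈ [0,1] with |s − t| ≤ δ_n: U_s(n/k_n) + τ̃ a_s(n/k_n) ≥ U_t(n/k_n) + τ a_t(n/k_n). -/

import Mathlib

open MeasureTheory Filter Topology Set

/-- `gfun y γ = (y^γ - 1)/γ`, read as `log y` for `γ = 0`. -/
noncomputable def gfun (y γ : ℝ) : ℝ := if γ = 0 then Real.log y else (y ^ γ - 1) / γ


section AuxQuantile

section Quantile
variable {Ω : Type*} [MeasurableSpace Ω] (P : Measure Ω) [IsProbabilityMeasure P]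
variable (Y : Ω → ℝ)

lemma cdf_mono (hY : Measurable Y) {x x' : ℝ} (h : x ≤ x') :
    (P {ω | Y ω ≤ x}).toReal ≤ (P {ω | Y ω ≤ x'}).toReal := by
  refine ENNReal.toReal_mono (measure_ne_top _ _) (measure_mono ?_)
  intro ω hω; exact le_trans hω h

lemma prob_compl_toReal (hY : Measurable Y) (z : ℝ) :
    (P {ω | z < Y ω}).toReal = 1 - (P {ω | Y ω ≤ z}).toReal := by
  have hm : MeasurableSet {ω | Y ω ≤ z} := hY measurableSet_Iic
  have h := measure_add_measure_compl (μ := P) hm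
  have hc : {ω | Y ω ≤ z}ᶜ = {ω | z < Y ω} := by ext ω; simp [not_le]
  rw [hc, measure_univ] at h
  have := congrArg ENNReal.toReal h
  rw [ENNReal.toReal_add (measure_ne_top _ _) (measure_ne_top _ _), ENNReal.toReal_one] at this
  linarith

lemma exists_cdf_ge (hY : Measurable Y) {c : ℝ} (hc : c < 1) :
    ∃ x : ℝ, c ≤ (P {ω | Y ω ≤ x}).toReal := by
  set s : ℕ → Set Ω := fun m => {ω | Y ω ≤ (m : ℝ)} with hs
  have hmono : Monotone s := by
    intro a b hab ω hω
    have : (a:ℝ) ≤ (b:ℝ) := Nat.cast_le.mpr hab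
    exact le_trans (show Y ω ≤ (a:ℝ) from hω) this
  have hunion : (⋃ m, s m) = univ := by
    ext ω; simp only [mem_iUnion, mem_univ, iff_true]
    obtain ⟨m, hm⟩ := exists_nat_gt (Y ω)
    exact ⟨m, le_of_lt hm⟩
  have ht := tendsto_measure_iUnion_atTop (μ := P) hmono
  rw [hunion, measure_univ] at ht
  have hlt : ENNReal.ofReal c < 1 := ENNReal.ofReal_lt_one.mpr hc
  have := ht.eventually (Ioi_mem_nhds hlt)
  obtain ⟨m, hm⟩ := this.exists
  refine ⟨m, ?_⟩
  exact (ENNReal.ofReal_le_iff_le_toReal (measure_ne_top _ _)).mp (le_of_lt hm)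

lemma exists_cdf_lt (hY : Measurable Y) {c : ℝ} (hc : 0 < c) :
    ∃ x : ℝ, (P {ω | Y ω ≤ x}).toReal < c := by
  set s : ℕ → Set Ω := fun m => {ω | Y ω ≤ -(m : ℝ)} with hs
  have hanti : Antitone s := by
    intro a b hab ω hω
    have : -(b:ℝ) ≤ -(a:ℝ) := neg_le_neg (Nat.cast_le.mpr hab)
    exact le_trans (show Y ω ≤ -(b:ℝ) from hω) this
  have hinter : (⋂ m, s m) = ∅ := by
    ext ω; simp only [mem_iInter, mem_empty_iff_false, iff_false, not_forall]
    obtain ⟨m, hm⟩ := exists_nat_gt (-(Y ω))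
    exact ⟨m, by simp only [hs, mem_setOf_eq, not_le]; linarith⟩
  have ht := MeasureTheory.tendsto_measure_iInter_atTop (μ := P) (s := s)
    (fun m => ((hY measurableSet_Iic).nullMeasurableSet)) hanti ⟨0, measure_ne_top _ _⟩
  rw [hinter, measure_empty] at ht
  have hlt : (0 : ENNReal) < ENNReal.ofReal c := ENNReal.ofReal_pos.mpr hc
  have := ht.eventually (Iio_mem_nhds hlt)
  obtain ⟨m, hm⟩ := this.exists
  exact ⟨-(m : ℝ), ENNReal.toReal_lt_of_lt_ofReal hm⟩

/-- If `z` is strictly below the `1-1/Q` quantile, the upper tail beyond `z` has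
probability `> 1/Q`. -/
lemma tail_gt_of_lt_quantile (hY : Measurable Y) {Q z : ℝ} (hQ : 1 < Q)
    (hz : z < sInf {x : ℝ | 1 - 1 / Q ≤ (P {ω | Y ω ≤ x}).toReal}) :
    1 / Q < (P {ω | z < Y ω}).toReal := by
  have hQ0 : 0 < Q := lt_trans one_pos hQ
  have h1Q : 0 < 1 / Q := by positivity
  have h1Q1 : 1 / Q < 1 := by rw [div_lt_one hQ0]; exact hQ
  set SS := {x : ℝ | 1 - 1 / Q ≤ (P {ω | Y ω ≤ x}).toReal} with hSS
  have hbdd : BddBelow SS := by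
    obtain ⟨x₀, hx₀⟩ := exists_cdf_lt P Y hY (c := 1 - 1/Q) (by linarith)
    refine ⟨x₀, fun x hx => ?_⟩
    by_contra hcon
    push_neg at hcon
    have := cdf_mono P Y hY (le_of_lt hcon)
    have hx' : 1 - 1/Q ≤ (P {ω | Y ω ≤ x}).toReal := hx
    linarith
  have hznot : z ∉ SS := fun hmem => absurd (csInf_le hbdd hmem) (not_le.mpr hz)
  have hFz : (P {ω | Y ω ≤ z}).toReal < 1 - 1 / Q := by
    by_contra hcon; push_neg at hcon; exact hznot hcon
  rw [prob_compl_toReal P Y hY]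
  linarith

/-- If the upper tail beyond `z` has probability `> 1/Q`, then `z` is `≤` the
`1-1/Q` quantile. -/
lemma le_quantile_of_tail_gt (hY : Measurable Y) {Q z : ℝ} (hQ : 1 < Q)
    (hz : 1 / Q < (P {ω | z < Y ω}).toReal) :
    z ≤ sInf {x : ℝ | 1 - 1 / Q ≤ (P {ω | Y ω ≤ x}).toReal} := by
  have hQ0 : 0 < Q := lt_trans one_pos hQ
  have h1Q : 0 < 1 / Q := by positivity
  have hne : {x : ℝ | 1 - 1 / Q ≤ (P {ω | Y ω ≤ x}).toReal}.Nonempty :=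
    exists_cdf_ge P Y hY (by linarith)
  refine le_csInf hne ?_
  intro b hb
  by_contra hcon
  push_neg at hcon
  have hmono := cdf_mono P Y hY (le_of_lt hcon)
  have hFz : (P {ω | Y ω ≤ z}).toReal = 1 - (P {ω | z < Y ω}).toReal := by
    have := prob_compl_toReal P Y hY z; linarith
  have hb' : 1 - 1/Q ≤ (P {ω | Y ω ≤ b}).toReal := hb
  rw [hFz] at hmono
  linarith

end Quantile

end AuxQuantile


lemma gfun_eq {y γ : ℝ} (hy : 0 < y) (hγ : γ ≠ 0) :
    gfun y γ = (Real.exp (γ * Real.log y) - 1) / γ := by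
  rw [gfun, if_neg hγ, Real.rpow_def_of_pos hy, mul_comm]

lemma gfun_zero (y : ℝ) : gfun y 0 = Real.log y := by rw [gfun, if_pos rfl]

lemma gfun_lt_gfun {y y' γ : ℝ} (hy : 0 < y) (h : y < y') :
    gfun y γ < gfun y' γ := by
  have hy' : 0 < y' := lt_trans hy h
  have hlog : Real.log y < Real.log y' := Real.log_lt_log hy h
  rcases lt_trichotomy γ 0 with hγ | hγ | hγ
  · rw [gfun_eq hy (ne_of_lt hγ), gfun_eq hy' (ne_of_lt hγ)]
    have h1 : γ * Real.log y' < γ * Real.log y := by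
      exact mul_lt_mul_of_neg_left hlog hγ
    have h2 : Real.exp (γ * Real.log y') < Real.exp (γ * Real.log y) := Real.exp_lt_exp.mpr h1
    have := div_lt_div_of_neg_of_lt hγ (by linarith : Real.exp (γ * Real.log y') - 1 < Real.exp (γ * Real.log y) - 1)
    linarith [this]
  · subst hγ; rw [gfun_zero, gfun_zero]; exact hlog
  · rw [gfun_eq hy (ne_of_gt hγ), gfun_eq hy' (ne_of_gt hγ)]
    have h1 : γ * Real.log y < γ * Real.log y' := by
      exact mul_lt_mul_of_pos_left hlog hγ
    have h2 : Real.exp (γ * Real.log y) < Real.exp (γ * Real.log y') := Real.exp_lt_exp.mpr h1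
    exact div_lt_div_of_pos_right (by linarith) hγ

lemma gfun_continuousAt_y {y₀ γ : ℝ} (hy : 0 < y₀) :
    ContinuousAt (fun y => gfun y γ) y₀ := by
  rcases eq_or_ne γ 0 with hγ | hγ
  · subst hγ
    have : ContinuousAt Real.log y₀ := Real.continuousAt_log (ne_of_gt hy)
    refine this.congr ?_
    filter_upwards [Ioi_mem_nhds hy] with y _
    rw [gfun_zero]
  · have hc : ContinuousAt (fun y => (Real.exp (γ * Real.log y) - 1) / γ) y₀ := by
      have h1 : ContinuousAt (fun y : ℝ => Real.log y) y₀ := Real.continuousAt_log (ne_of_gt hy)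
      fun_prop (disch := assumption)
    refine hc.congr ?_
    filter_upwards [Ioi_mem_nhds hy] with y hy'
    rw [gfun_eq hy' hγ]

lemma gfun_continuousAt_gamma {y γ₀ : ℝ} (hy : 0 < y) :
    ContinuousAt (fun γ => gfun y γ) γ₀ := by
  rcases eq_or_ne γ₀ 0 with hγ | hγ
  · subst hγ
    set L := Real.log y with hL
    have h1 : HasDerivAt (fun γ : ℝ => L * γ) (L * 1) 0 := (hasDerivAt_id (0:ℝ)).const_mul L
    have h2 : HasDerivAt (fun γ : ℝ => Real.exp (L * γ)) (Real.exp (L * 0) * (L * 1)) 0 := h1.exp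
    have h3 : HasDerivAt (fun γ : ℝ => Real.exp (L * γ)) L 0 := by
      simpa using h2
    have h4 := hasDerivAt_iff_tendsto_slope.mp h3
    have h5 : Tendsto (fun γ => gfun y γ) (𝓝[≠] (0:ℝ)) (𝓝 L) := by
      refine h4.congr' ?_
      filter_upwards [self_mem_nhdsWithin] with γ (hγ' : γ ≠ 0)
      rw [slope_def_field, gfun_eq hy hγ']
      simp [mul_comm, hL]
    have h6 : Tendsto (fun γ => gfun y γ) (pure (0:ℝ)) (𝓝 L) := by
      have : gfun y 0 = L := gfun_zero y
      rw [Filter.tendsto_pure_left]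
      intro s hs
      rw [this] at *
      exact mem_of_mem_nhds (by rwa [this] at hs)
    rw [ContinuousAt, gfun_zero, ← nhdsNE_sup_pure]
    exact Tendsto.sup h5 h6
  · have hc : ContinuousAt (fun γ => (Real.exp (γ * Real.log y) - 1) / γ) γ₀ := by
      fun_prop (disch := assumption)
    refine hc.congr ?_
    filter_upwards [isOpen_ne.mem_nhds hγ] with γ hγ'
    rw [gfun_eq hy hγ']

lemma log_le_gfun {y γ : ℝ} (hy : 0 < y) (hγ : 0 ≤ γ) : Real.log y ≤ gfun y γ := by
  rcases eq_or_lt_of_le hγ with h | h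
  · rw [← h, gfun_zero]
  · rw [gfun_eq hy (ne_of_gt h)]
    rw [le_div_iff₀ h]
    have := Real.add_one_le_exp (γ * Real.log y)
    linarith

/-- For each `γ₀` satisfying the `τ`-constraint, there is `y > 0` with `gfun y γ₀ > τ`. -/
lemma gfun_exists_gt {γ₀ τ : ℝ} (h : γ₀ < 0 → τ < -1 / γ₀) :
    ∃ y : ℝ, 0 < y ∧ τ < gfun y γ₀ := by
  rcases lt_or_ge γ₀ 0 with hγ | hγ
  · have hτ := h hγ
    set τm := (τ + (-1 / γ₀)) / 2 with hτm
    have h1 : τ < τm := by rw [hτm]; linarith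
    have h2 : τm < -1 / γ₀ := by rw [hτm]; linarith
    have h3 : 0 < 1 + γ₀ * τm := by
      have h5 := mul_lt_mul_of_neg_left h2 hγ
      have h4 : γ₀ * (-1 / γ₀) = -1 := by
        rw [mul_div_assoc']
        rw [mul_neg, mul_one, neg_div, div_self (ne_of_lt hγ)]
      rw [h4] at h5
      linarith
    refine ⟨Real.exp (Real.log (1 + γ₀ * τm) / γ₀ + 1), Real.exp_pos _, ?_⟩
    have hL : Real.log (Real.exp (Real.log (1 + γ₀ * τm) / γ₀ + 1))
        = Real.log (1 + γ₀ * τm) / γ₀ + 1 := Real.log_exp _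
    rw [gfun_eq (Real.exp_pos _) (ne_of_lt hγ), hL]
    have h5 : γ₀ * (Real.log (1 + γ₀ * τm) / γ₀ + 1) = Real.log (1 + γ₀ * τm) + γ₀ := by
      have hne := ne_of_lt hγ
      field_simp
    rw [h5]
    have h6 : Real.exp (Real.log (1 + γ₀ * τm) + γ₀) < 1 + γ₀ * τm := by
      have : Real.exp (Real.log (1 + γ₀ * τm) + γ₀) < Real.exp (Real.log (1 + γ₀ * τm)) := by
        apply Real.exp_lt_exp.mpr; linarith
      rwa [Real.exp_log h3] at this
    have h7 : (Real.exp (Real.log (1 + γ₀ * τm) + γ₀) - 1) / γ₀ > τm := by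
      rw [gt_iff_lt, lt_div_iff_of_neg hγ]
      nlinarith
    linarith
  · refine ⟨Real.exp (|τ| + 1), Real.exp_pos _, ?_⟩
    have := log_le_gfun (Real.exp_pos (|τ| + 1)) hγ
    rw [Real.log_exp] at this
    have := abs_nonneg τ
    have := le_abs_self τ
    linarith


lemma core_step {Ω : Type*} [MeasurableSpace Ω] (P : Measure Ω) [IsProbabilityMeasure P]
    (Xs Xu : Ω → ℝ) (hXs : Measurable Xs) (hXu : Measurable Xu)
    (q yl yh η el τ Au As Uuq UuQ Usq UsQ glo ghi : ℝ)
    (hq : 0 < q)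
    (hylq : 1 < yl * q) (hyhq : 1 < yh * q)
    (hyl : 0 < yl) (hyh : 0 < yh)
    (hgap : 1/yh < 1/yl)
    (hAu : 0 < Au) (hAs : 0 < As) (hη : 0 < η)
    (hel : el ≤ η)
    (hUuQ : UuQ = sInf {x : ℝ | 1 - 1/(yl*q) ≤ (P {ω | Xu ω ≤ x}).toReal})
    (hUsQ : UsQ = sInf {x : ℝ | 1 - 1/(yh*q) ≤ (P {ω | Xs ω ≤ x}).toReal})
    (hMu : |(UuQ - Uuq)/Au - glo| ≤ η)
    (hMs : |(UsQ - Usq)/As - ghi| ≤ η)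
    (hglo : τ + 3*η ≤ glo)
    (hSb : (P {ω | el < |Xs ω - Xu ω| / Au ∧ Uuq + τ * Au < Xu ω}).toReal
        ≤ (1/yl - 1/yh)/2 * (1/q)) :
    Uuq + (glo - 3*η)*Au ≤ Usq + (ghi + η)*As := by
  set z := UuQ - η*Au with hz
  set w := UuQ - 2*η*Au with hw
  -- bounds from condition M at u
  have hMu1 : (glo - η) * Au ≤ UuQ - Uuq := by
    have h1 : glo - η ≤ (UuQ - Uuq)/Au := by
      have := (abs_le.mp hMu).2
      have := (abs_le.mp hMu).1
      linarith
    calc (glo - η) * Au ≤ ((UuQ - Uuq)/Au) * Au := by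
          exact mul_le_mul_of_nonneg_right h1 (le_of_lt hAu)
      _ = UuQ - Uuq := by field_simp
  have hMs1 : UsQ - Usq ≤ (ghi + η) * As := by
    have h1 : (UsQ - Usq)/As ≤ ghi + η := by
      have := (abs_le.mp hMs).2
      have := (abs_le.mp hMs).1
      linarith
    calc UsQ - Usq = ((UsQ - Usq)/As) * As := by field_simp
      _ ≤ (ghi + η) * As := mul_le_mul_of_nonneg_right h1 (le_of_lt hAs)
  -- tail bound at u
  have hztail : 1/(yl*q) < (P {ω | z < Xu ω}).toReal := by
    refine tail_gt_of_lt_quantile P Xu hXu hylq ?_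
    rw [← hUuQ, hz]
    nlinarith
  have hzτ : Uuq + τ * Au ≤ z := by
    have : z = UuQ - η*Au := rfl
    nlinarith
  -- event algebra
  set base := {ω | z < Xu ω} with hbase
  set bad := {ω | el < |Xs ω - Xu ω| / Au ∧ Uuq + τ * Au < Xu ω} with hbad
  have hsub : base \ bad ⊆ {ω | w < Xs ω} := by
    intro ω hω
    obtain ⟨hb, hnb⟩ := hω
    have hXuω : z < Xu ω := hb
    have hthr : Uuq + τ * Au < Xu ω := lt_of_le_of_lt hzτ hXuω
    have hnlt : ¬ (el < |Xs ω - Xu ω| / Au) := by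
      intro hcon; exact hnb ⟨hcon, hthr⟩
    push_neg at hnlt
    have habs : |Xs ω - Xu ω| ≤ η * Au := by
      have h1 : |Xs ω - Xu ω| ≤ el * Au := by
        rw [div_le_iff₀ hAu] at hnlt; linarith [hnlt]
      have := mul_le_mul_of_nonneg_right hel (le_of_lt hAu)
      linarith
    have h2 : Xu ω - Xs ω ≤ |Xs ω - Xu ω| := by
      rw [abs_sub_comm]; exact le_abs_self _
    show w < Xs ω
    have : z - η * Au = w := by rw [hz, hw]; ring
    linarith
  have hbadm : MeasurableSet bad := by
    have h1 : Measurable (fun ω => |Xs ω - Xu ω| / Au) := ((hXs.sub hXu).abs).div_const Au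
    have h2 : bad = (fun ω => |Xs ω - Xu ω| / Au) ⁻¹' (Ioi el) ∩ Xu ⁻¹' (Ioi (Uuq + τ * Au)) := by
      ext ω; simp [hbad, mem_setOf_eq, and_comm]
    rw [h2]
    exact (h1 measurableSet_Ioi).inter (hXu measurableSet_Ioi)
  -- probability chain
  have hple : (P base).toReal ≤ (P (base \ bad)).toReal + (P bad).toReal := by
    have hsub2 : base ⊆ (base \ bad) ∪ bad := by
      intro ω hω
      by_cases hb : ω ∈ bad
      · exact Or.inr hb
      · exact Or.inl ⟨hω, hb⟩
    calc (P base).toReal ≤ (P ((base \ bad) ∪ bad)).toReal :=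
          ENNReal.toReal_mono (measure_ne_top _ _) (measure_mono hsub2)
      _ ≤ (P (base \ bad) + P bad).toReal := by
          refine ENNReal.toReal_mono ?_ (measure_union_le _ _)
          exact ENNReal.add_ne_top.mpr ⟨measure_ne_top _ _, measure_ne_top _ _⟩
      _ = (P (base \ bad)).toReal + (P bad).toReal :=
          ENNReal.toReal_add (measure_ne_top _ _) (measure_ne_top _ _)
  have hmono2 : (P (base \ bad)).toReal ≤ (P {ω | w < Xs ω}).toReal :=
    ENNReal.toReal_mono (measure_ne_top _ _) (measure_mono hsub)
  have hwtail : 1/(yh*q) < (P {ω | w < Xs ω}).toReal := by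
    have e1 : (1:ℝ)/(yl*q) = (1/yl)*(1/q) := by
      rw [one_div, mul_inv, one_div, one_div]
    have e2 : (1:ℝ)/(yh*q) = (1/yh)*(1/q) := by
      rw [one_div, mul_inv, one_div, one_div]
    have hq1 : 0 < 1/q := by positivity
    nlinarith [hztail, hSb, hple, hmono2]
  have hws : w ≤ UsQ := by
    rw [hUsQ]
    exact le_quantile_of_tail_gt P Xs hXs hyhq hwtail
  nlinarith

lemma final_algebra (τ τt v₁ v₃ η μ gat gbs gcs gdt At As Ut Us : ℝ)
    (hττt : τ < τt)
    (hAt : 0 < At) (hAs : 0 < As)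
    (hη : 0 < η) (hμ : 0 ≤ μ)
    (n1 : 4*η ≤ v₁ - τ)
    (n2 : μ + 6*η < v₃ - v₁)
    (n3 : ((v₁ - τ) - (τt - τ) + (μ + 6*η)) * ((v₃ - v₁) + (μ + 6*η))
        ≤ ((v₁ - τ) - (μ + 6*η)) * ((v₃ - v₁) - (μ + 6*η)))
    (hgat : v₁ - η ≤ gat) (hgbs : gbs ≤ v₁ + μ + η)
    (hgcs : v₃ - η ≤ gcs) (hgdt : gdt ≤ v₃ + μ + η)
    (hα : Ut + (gat - 3*η)*At ≤ Us + (gbs + η)*As)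
    (hβ : Us + (gcs - 3*η)*As ≤ Ut + (gdt + η)*At) :
    Ut + τ*At ≤ Us + τt*As := by
  set σ := μ + 6*η with hσ
  set e := v₁ - τ with he
  set G := v₃ - v₁ with hG
  set d := τt - τ with hd
  have hσ4 : 4*η ≤ σ := by rw [hσ]; linarith
  have hGσ : 0 < G - σ := by rw [hG, hσ]; linarith [n2]
  have hsum : (gcs - gbs - 4*η)*As ≤ (gdt - gat + 4*η)*At := by nlinarith [hα, hβ]
  have h1 : (G - σ)*As ≤ (gcs - gbs - 4*η)*As := by
    apply mul_le_mul_of_nonneg_right _ (le_of_lt hAs)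
    rw [hG, hσ]; linarith
  have h2 : (gdt - gat + 4*η)*At ≤ (G + σ)*At := by
    apply mul_le_mul_of_nonneg_right _ (le_of_lt hAt)
    rw [hG, hσ]; linarith
  have hratio : (G - σ)*As ≤ (G + σ)*At := le_trans h1 (le_trans hsum h2)
  have key : (gbs + η - τt)*As ≤ (gat - 3*η - τ)*At := by
    have hcoefR : e - 4*η ≤ gat - 3*η - τ := by rw [he]; linarith
    rcases le_or_gt (gbs + η - τt) 0 with hc | hc
    · have hL : (gbs + η - τt)*As ≤ 0 := mul_nonpos_of_nonpos_of_nonneg hc (le_of_lt hAs)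
      have hR : 0 ≤ (gat - 3*η - τ)*At := by
        apply mul_nonneg _ (le_of_lt hAt)
        linarith
      linarith
    · set c := e - d + σ with hc'
      have hcb : gbs + η - τt ≤ c := by rw [hc', he, hd, hσ]; linarith
      have hcpos : 0 < c := lt_of_lt_of_le hc hcb
      have step1 : (gbs + η - τt)*As ≤ c*As :=
        mul_le_mul_of_nonneg_right hcb (le_of_lt hAs)
      have step2 : c*((G - σ)*As) ≤ c*((G + σ)*At) :=
        mul_le_mul_of_nonneg_left hratio (le_of_lt hcpos)
      have step3 : c*(G + σ) ≤ (e - σ)*(G - σ) := n3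
      have step4 : c*((G + σ)*At) ≤ ((e - σ)*(G - σ))*At := by
        rw [← mul_assoc]
        exact mul_le_mul_of_nonneg_right step3 (le_of_lt hAt)
      have step5 : (c*As)*(G - σ) ≤ ((e - σ)*At)*(G - σ) := by nlinarith [step2, step4]
      have step6 : c*As ≤ (e - σ)*At := le_of_mul_le_mul_right step5 hGσ
      have step7 : (e - σ)*At ≤ (gat - 3*η - τ)*At := by
        apply mul_le_mul_of_nonneg_right _ (le_of_lt hAt)
        linarith
      linarith
  linarith [hα, key]


lemma n3_aux (e G d σ₀ : ℝ) (he0 : 0 < e) (hG : 0 < G) (hd0 : 0 < d) (hσ₀pos : 0 < σ₀)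
    (hkey : σ₀ * (14*e + 7*G + 1) ≤ d*G) :
    (e - d + (σ₀/2 + 6*(σ₀/14))) * (G + (σ₀/2 + 6*(σ₀/14)))
      ≤ (e - (σ₀/2 + 6*(σ₀/14))) * (G - (σ₀/2 + 6*(σ₀/14))) := by
  nlinarith [hkey, mul_pos hd0 hσ₀pos, mul_pos he0 hσ₀pos, mul_pos hG hσ₀pos, sq_nonneg σ₀]

lemma package (γ : ℝ → ℝ) (hγcont : ContinuousOn γ (Icc 0 1)) (τ τt : ℝ) (hττt : τ < τt)
    (hτ : ∀ s ∈ Icc (0:ℝ) 1, γ s < 0 → τ < -1/γ s) (t₀ : ℝ) (ht₀ : t₀ ∈ Icc (0:ℝ) 1) :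
    ∃ r ya yb yc yd η μ v₁ v₃ : ℝ,
      0 < r ∧ 0 < η ∧ 0 ≤ μ ∧ 0 < ya ∧ ya < yb ∧ yb ≤ yc ∧ yc < yd ∧
      4*η ≤ v₁ - τ ∧ μ + 6*η < v₃ - v₁ ∧
      ((v₁ - τ) - (τt - τ) + (μ + 6*η)) * ((v₃ - v₁) + (μ + 6*η))
        ≤ ((v₁ - τ) - (μ + 6*η)) * ((v₃ - v₁) - (μ + 6*η)) ∧
      (∀ t ∈ Icc (0:ℝ) 1, |t - t₀| < r →
        (|gfun ya (γ t) - v₁| ≤ η ∧ gfun yb (γ t) ≤ v₁ + μ + η ∧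
         |gfun yc (γ t) - v₃| ≤ η ∧ gfun yd (γ t) ≤ v₃ + μ + η)) := by
  set γ₀ := γ t₀ with hγ₀
  obtain ⟨ya, hya0, hyaτ⟩ := gfun_exists_gt (hτ t₀ ht₀)
  set v₁ := gfun ya γ₀ with hv₁
  set yc := ya + 1 with hyc
  have hyc0 : 0 < yc := by rw [hyc]; linarith
  set v₃ := gfun yc γ₀ with hv₃
  have hG : 0 < v₃ - v₁ := by
    have := gfun_lt_gfun (γ := γ₀) hya0 (show ya < yc by rw [hyc]; linarith)
    rw [← hv₁, ← hv₃] at this; linarith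
  set e := v₁ - τ with he
  have he0 : 0 < e := by rw [he]; linarith
  set G := v₃ - v₁ with hGdef
  set d := τt - τ with hd
  have hd0 : 0 < d := by rw [hd]; linarith
  have hden : (0:ℝ) < 14*e + 7*G + 1 := by positivity
  set σ₀ := min (e/9) (min (G/15) (d*G/(14*e + 7*G + 1))) with hσ₀
  have hσ₀pos : 0 < σ₀ := by
    rw [hσ₀]
    refine lt_min (by positivity) (lt_min (by positivity) (by positivity))
  have hσ₀e : σ₀ ≤ e/9 := min_le_left _ _
  have hσ₀G : σ₀ ≤ G/15 := le_trans (min_le_right _ _) (min_le_left _ _)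
  have hσ₀d : σ₀ ≤ d*G/(14*e + 7*G + 1) := le_trans (min_le_right _ _) (min_le_right _ _)
  have hσ₀d' : σ₀ * (14*e + 7*G + 1) ≤ d*G := by
    rw [← le_div_iff₀ hden]; exact hσ₀d
  set η := σ₀/14 with hη
  set μ := σ₀/2 with hμ
  have hη0 : 0 < η := by rw [hη]; positivity
  have hμ0 : 0 ≤ μ := by rw [hμ]; positivity
  -- choose yb
  obtain ⟨θ₁, hθ₁0, hθ₁⟩ := Metric.continuousAt_iff.mp (gfun_continuousAt_y (γ := γ₀) hya0) μ
    (by positivity)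
  set yb := ya + min (θ₁/2) (1/2) with hyb
  have hyab : ya < yb := by
    rw [hyb]; have : 0 < min (θ₁/2) (1/2) := lt_min (by linarith) (by norm_num)
    linarith
  have hybyc : yb ≤ yc := by
    rw [hyb, hyc]
    have : min (θ₁/2) (1/2) ≤ 1/2 := min_le_right _ _
    linarith
  have hvb : gfun yb γ₀ ≤ v₁ + μ := by
    have hdist : dist yb ya < θ₁ := by
      rw [Real.dist_eq, hyb]
      have h1 : min (θ₁/2) (1/2) ≤ θ₁/2 := min_le_left _ _
      have h2 : 0 < min (θ₁/2) (1/2) := lt_min (by linarith) (by norm_num)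
      rw [abs_of_pos (by linarith : (0:ℝ) < ya + min (θ₁/2) (1/2) - ya)]
      linarith
    have := hθ₁ hdist
    rw [Real.dist_eq] at this
    have := abs_lt.mp this
    linarith [this.2, hv₁.le, hv₁.ge]
  -- choose yd
  obtain ⟨θ₂, hθ₂0, hθ₂⟩ := Metric.continuousAt_iff.mp (gfun_continuousAt_y (γ := γ₀) hyc0) μ
    (by positivity)
  set yd := yc + min (θ₂/2) (1/2) with hyd
  have hycd : yc < yd := by
    rw [hyd]; have : 0 < min (θ₂/2) (1/2) := lt_min (by linarith) (by norm_num)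
    linarith
  have hvd : gfun yd γ₀ ≤ v₃ + μ := by
    have hdist : dist yd yc < θ₂ := by
      rw [Real.dist_eq, hyd]
      have h1 : min (θ₂/2) (1/2) ≤ θ₂/2 := min_le_left _ _
      have h2 : 0 < min (θ₂/2) (1/2) := lt_min (by linarith) (by norm_num)
      rw [abs_of_pos (by linarith : (0:ℝ) < yc + min (θ₂/2) (1/2) - yc)]
      linarith
    have := hθ₂ hdist
    rw [Real.dist_eq] at this
    have := abs_lt.mp this
    linarith [this.2, hv₃.le, hv₃.ge]
  have hyb0 : 0 < yb := lt_trans hya0 hyab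
  have hyd0 : 0 < yd := lt_of_lt_of_le (lt_of_lt_of_le hyb0 hybyc) (le_of_lt hycd)
  -- choose r via continuity of t ↦ gfun yᵢ (γ t) within Icc
  have hcw : ∀ y : ℝ, 0 < y → ContinuousWithinAt (fun t => gfun y (γ t)) (Icc (0:ℝ) 1) t₀ :=
    fun y hy => (gfun_continuousAt_gamma (γ₀ := γ₀) hy).comp_continuousWithinAt (hγcont t₀ ht₀)
  obtain ⟨r₁, hr₁0, hr₁⟩ := Metric.continuousWithinAt_iff.mp (hcw ya hya0) η hη0
  obtain ⟨r₂, hr₂0, hr₂⟩ := Metric.continuousWithinAt_iff.mp (hcw yb hyb0) η hη0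
  obtain ⟨r₃, hr₃0, hr₃⟩ := Metric.continuousWithinAt_iff.mp (hcw yc hyc0) η hη0
  obtain ⟨r₄, hr₄0, hr₄⟩ := Metric.continuousWithinAt_iff.mp (hcw yd hyd0) η hη0
  set r := min (min r₁ r₂) (min r₃ r₄) with hr
  have hr0 : 0 < r := lt_min (lt_min hr₁0 hr₂0) (lt_min hr₃0 hr₄0)
  refine ⟨r, ya, yb, yc, yd, η, μ, v₁, v₃, hr0, hη0, hμ0, hya0, hyab, hybyc, hycd, ?_, ?_, ?_, ?_⟩
  · -- n1 : 4η ≤ v₁ - τ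
    rw [hη, ← he]; linarith
  · -- n2 : μ + 6η < v₃ - v₁
    rw [hη, hμ, ← hGdef]; linarith
  · -- n3
    rw [hη, hμ]
    exact n3_aux e G d σ₀ he0 hG hd0 hσ₀pos hσ₀d'
  · intro t ht hdist
    have hd1 : dist t t₀ < r₁ := by
      rw [Real.dist_eq]; exact lt_of_lt_of_le hdist (le_trans (min_le_left _ _) (min_le_left _ _))
    have hd2 : dist t t₀ < r₂ := by
      rw [Real.dist_eq]; exact lt_of_lt_of_le hdist (le_trans (min_le_left _ _) (min_le_right _ _))
    have hd3 : dist t t₀ < r₃ := by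
      rw [Real.dist_eq]; exact lt_of_lt_of_le hdist (le_trans (min_le_right _ _) (min_le_left _ _))
    have hd4 : dist t t₀ < r₄ := by
      rw [Real.dist_eq]; exact lt_of_lt_of_le hdist (le_trans (min_le_right _ _) (min_le_right _ _))
    have b1 := hr₁ ht hd1
    have b2 := hr₂ ht hd2
    have b3 := hr₃ ht hd3
    have b4 := hr₄ ht hd4
    rw [Real.dist_eq] at b1 b2 b3 b4
    refine ⟨le_of_lt (by rwa [← hv₁] at b1), ?_, le_of_lt (by rwa [← hv₃] at b3), ?_⟩
    · have := abs_lt.mp b2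
      linarith [this.2, hvb]
    · have := abs_lt.mp b4
      linarith [this.2, hvd]

set_option maxHeartbeats 1000000 in
/-- Lemma 1, eq. (3.1): under M(λₙ) and S(λₙ), for every τ̃ > τ one has
eventually U_s(n/kₙ) + τ̃ a_s(n/kₙ) ≥ U_t(n/kₙ) + τ a_t(n/kₙ) for all |s-t| ≤ δₙ. -/
theorem threshold_comparison
    {Ω : Type*} [MeasurableSpace Ω] (P : Measure Ω) [IsProbabilityMeasure P]
    (X : Ω → ℝ → ℝ)
    (hXmeas : ∀ s, Measurable fun ω => X ω s)
    (hXcont : ∀ ω, ContinuousOn (X ω) (Icc 0 1))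
    (γ : ℝ → ℝ) (hγcont : ContinuousOn γ (Icc 0 1))
    (F U : ℝ → ℝ → ℝ)
    (hF : ∀ s x, F s x = (P {ω | X ω s ≤ x}).toReal)
    (hU : ∀ s y, U s y = sInf {x : ℝ | 1 - 1 / y ≤ F s x})
    (A : ℕ → ℝ → ℝ) (hApos : ∀ n, ∀ s ∈ Icc (0:ℝ) 1, 0 < A n s)
    (k : ℕ → ℕ) (hk : ∀ n, 1 ≤ n → 1 ≤ k n ∧ k n ≤ n)
    (hkinfty : Tendsto (fun n : ℕ => (k n : ℝ)) atTop atTop)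
    (hkn0 : Tendsto (fun n : ℕ => (k n : ℝ) / n) atTop (𝓝 0))
    (lam : ℕ → ℝ) (hlam_pos : ∀ n, 0 < lam n) (hlam_bdd : ∃ C, ∀ n, lam n ≤ C)
    (δ : ℕ → ℝ) (hδpos : ∀ n, 0 < δ n) (hδ0 : Tendsto δ atTop (𝓝 0))
    -- the constant τ of condition S(λₙ): τ < τ_max = inf_t 1/γ_t⁻
    (τ : ℝ) (hτ : ∀ s ∈ Icc (0:ℝ) 1, γ s < 0 → τ < -1 / γ s)
    -- condition M(λₙ)
    (hM : ∀ y₀ y₁ : ℝ, 0 < y₀ → y₀ < y₁ → ∀ ε > 0, ∀ᶠ n : ℕ in atTop,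
      ∀ s ∈ Icc (0:ℝ) 1, ∀ y ∈ Icc y₀ y₁,
        |(U s (y * ((n : ℝ) / (k n : ℝ))) - U s ((n : ℝ) / (k n : ℝ))) / A n s
          - gfun y (γ s)| ≤ ε * lam n)
    -- condition S(λₙ)
    (hS : ∀ ε > 0, ∀ ε' > 0, ∀ᶠ n : ℕ in atTop,
      ∀ s ∈ Icc (0:ℝ) 1, ∀ u ∈ Icc (0:ℝ) 1, |s - u| ≤ δ n →
        (P {ω | ε * lam n < |X ω s - X ω u| / A n u ∧
            U u ((n : ℝ) / (k n : ℝ)) + τ * A n u < X ω u}).toReal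
          ≤ ε' * (lam n * (k n : ℝ) / n)) :
    ∀ τt : ℝ, τ < τt → ∃ N : ℕ, ∀ n > N,
      ∀ s ∈ Icc (0:ℝ) 1, ∀ u ∈ Icc (0:ℝ) 1, |s - u| ≤ δ n →
        U u ((n : ℝ) / (k n : ℝ)) + τ * A n u
          ≤ U s ((n : ℝ) / (k n : ℝ)) + τt * A n s := by
  intro τt hττt
  obtain ⟨C₀, hC₀⟩ := hlam_bdd
  set C := max C₀ 1 with hC
  have hC0 : (0:ℝ) < C := lt_of_lt_of_le one_pos (le_max_right _ _)
  have hlamC : ∀ n, lam n ≤ C := fun n => le_trans (hC₀ n) (le_max_left _ _)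
  have hUF : ∀ (s' : ℝ) (y' : ℝ),
      U s' y' = sInf {x : ℝ | 1 - 1/y' ≤ (P {ω | X ω s' ≤ x}).toReal} := by
    intro s' y'
    rw [hU s' y']
    congr 1
    ext x
    simp only [mem_setOf_eq, hF]
  -- packages
  have hpkg := fun i : (Icc (0:ℝ) 1) => package γ hγcont τ τt hττt hτ i.1 i.2
  choose r ya yb yc yd η μ v₁ v₃ hr0 hη0 hμ0 hya0 hyab hybyc hycd n1 n2 n3 hloc using hpkg
  have hyb0 : ∀ i, 0 < yb i := fun i => lt_trans (hya0 i) (hyab i)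
  have hyc0 : ∀ i, 0 < yc i := fun i => lt_of_lt_of_le (hyb0 i) (hybyc i)
  have hyd0 : ∀ i, 0 < yd i := fun i => lt_trans (hyc0 i) (hycd i)
  have hgap1 : ∀ i, 1/(yb i) < 1/(ya i) := fun i => one_div_lt_one_div_of_lt (hya0 i) (hyab i)
  have hgap2 : ∀ i, 1/(yd i) < 1/(yc i) := fun i => one_div_lt_one_div_of_lt (hyc0 i) (hycd i)
  -- finite subcover
  have hcover : Icc (0:ℝ) 1 ⊆ ⋃ i : (Icc (0:ℝ) 1), Metric.ball i.1 (r i / 2) := by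
    intro t ht
    refine mem_iUnion.mpr ⟨⟨t, ht⟩, ?_⟩
    simp only [Metric.mem_ball, dist_self]
    exact half_pos (hr0 _)
  obtain ⟨fin, hfin⟩ := isCompact_Icc.elim_finite_subcover
    (fun i : (Icc (0:ℝ) 1) => Metric.ball i.1 (r i / 2)) (fun i => Metric.isOpen_ball) hcover
  have hne : fin.Nonempty := by
    have h0 : (0:ℝ) ∈ Icc (0:ℝ) 1 := by constructor <;> norm_num
    obtain ⟨i, hi, -⟩ := mem_iUnion₂.mp (hfin h0)
    exact ⟨i, hi⟩
  set ζ := (fin.inf' hne fun i => r i) / 2 with hζ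
  have hζ0 : 0 < ζ := by
    refine half_pos ?_
    rw [Finset.lt_inf'_iff]
    exact fun i _ => hr0 i
  set amin := fin.inf' hne fun i => ya i with hamin
  have hamin0 : 0 < amin := by
    rw [hamin, Finset.lt_inf'_iff]
    exact fun i _ => hya0 i
  -- the eventual statement
  set ep := fun i => η i / C with hep
  set ep' := fun i => min (1/(ya i) - 1/(yb i)) (1/(yc i) - 1/(yd i)) / (2*C) with hep'
  have hep0 : ∀ i, 0 < ep i := fun i => div_pos (hη0 i) hC0
  have hep'0 : ∀ i, 0 < ep' i := by
    intro i
    refine div_pos (lt_min ?_ ?_) (by positivity)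
    · linarith [hgap1 i]
    · linarith [hgap2 i]
  have hev : ∀ᶠ n : ℕ in atTop,
      ((1 ≤ n ∧ δ n < ζ) ∧ (k n : ℝ)/(n:ℝ) < amin/2) ∧
      (∀ i ∈ fin,
        (∀ s ∈ Icc (0:ℝ) 1, ∀ y ∈ Icc (ya i/2) (yd i + 1),
          |(U s (y * ((n : ℝ) / (k n : ℝ))) - U s ((n : ℝ) / (k n : ℝ))) / A n s
            - gfun y (γ s)| ≤ ep i * lam n) ∧
        (∀ s ∈ Icc (0:ℝ) 1, ∀ u ∈ Icc (0:ℝ) 1, |s - u| ≤ δ n →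
          (P {ω | ep i * lam n < |X ω s - X ω u| / A n u ∧
              U u ((n : ℝ) / (k n : ℝ)) + τ * A n u < X ω u}).toReal
            ≤ ep' i * (lam n * (k n : ℝ) / n))) := by
    refine Filter.Eventually.and (Filter.Eventually.and (Filter.Eventually.and ?_ ?_) ?_) ?_
    · exact eventually_ge_atTop 1
    · have := hδ0.eventually (Iio_mem_nhds hζ0)
      filter_upwards [this] with n hn using hn
    · have := hkn0.eventually (Iio_mem_nhds (half_pos hamin0))
      filter_upwards [this] with n hn using hn
    · rw [eventually_all_finset]
      intro i hi
      refine Filter.Eventually.and ?_ ?_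
      · refine hM (ya i/2) (yd i + 1) (by have := hya0 i; linarith) ?_ (ep i) (hep0 i)
        have := hya0 i; have := hyab i; have := hybyc i; have := hycd i
        linarith
      · exact hS (ep i) (hep0 i) (ep' i) (hep'0 i)
  obtain ⟨N, hN⟩ := eventually_atTop.mp hev
  refine ⟨N, fun n hn s hs u hu hsu => ?_⟩
  obtain ⟨⟨⟨hn1, hδζ⟩, hknsmall⟩, hin⟩ := hN n (le_of_lt hn)
  obtain ⟨hk1, hkn⟩ := hk n hn1
  set q := (n : ℝ) / (k n : ℝ) with hq
  have hkpos : (0:ℝ) < (k n : ℝ) := by exact_mod_cast hk1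
  have hnpos : (0:ℝ) < (n : ℝ) := by exact_mod_cast hn1
  have hq0 : 0 < q := div_pos hnpos hkpos
  have hkq : (k n : ℝ)/(n:ℝ) = 1/q := by
    rw [hq, one_div, inv_div]
  -- find the covering piece for u
  obtain ⟨i, hifin, hui⟩ := mem_iUnion₂.mp (hfin hu)
  have hui' : |u - i.1| < r i / 2 := by
    have := Metric.mem_ball.mp hui
    rwa [Real.dist_eq] at this
  have hζri : ζ ≤ r i / 2 := by
    rw [hζ]
    exact div_le_div_of_nonneg_right (Finset.inf'_le _ hifin) (by norm_num) |>.trans (le_refl _)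
  have hsi : |s - i.1| < r i := by
    have h1 : |s - i.1| ≤ |s - u| + |u - i.1| := abs_sub_le s u i.1
    have h2 : |s - u| < ζ := lt_of_le_of_lt hsu hδζ
    linarith [hζri]
  have hui'' : |u - i.1| < r i := lt_of_lt_of_le hui' (by linarith [hr0 i])
  obtain ⟨locu1, locu2, locu3, locu4⟩ := hloc i u hu hui''
  obtain ⟨locs1, locs2, locs3, locs4⟩ := hloc i s hs hsi
  obtain ⟨hMi, hSi⟩ := hin i hifin
  -- q is large enough
  have hyaq : 1 < ya i * q := by
    have h1 : amin ≤ ya i := Finset.inf'_le _ hifin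
    have h3 : 1/q < amin/2 := by rw [← hkq]; exact hknsmall
    have h4 := mul_lt_mul_of_pos_right h3 hq0
    rw [one_div, inv_mul_cancel₀ (ne_of_gt hq0)] at h4
    nlinarith
  have hybq : 1 < yb i * q := by nlinarith [hyaq, hyab i, hq0]
  have hycq : 1 < yc i * q := by nlinarith [hybq, hybyc i, hq0]
  have hydq : 1 < yd i * q := by nlinarith [hycq, hycd i, hq0]
  have hAu : 0 < A n u := hApos n u hu
  have hAs : 0 < A n s := hApos n s hs
  have hel : ep i * lam n ≤ η i := by
    have h1 : ep i * lam n ≤ ep i * C := mul_le_mul_of_nonneg_left (hlamC n) (le_of_lt (hep0 i))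
    have h2 : ep i * C = η i := by
      rw [hep]
      field_simp
    linarith
  -- membership of the four levels in the M-window
  have hmem : ∀ y ∈ ({ya i, yb i, yc i, yd i} : Set ℝ), y ∈ Icc (ya i/2) (yd i + 1) := by
    intro y hy
    have h1 := hya0 i; have h2 := hyab i; have h3 := hybyc i; have h4 := hycd i
    rcases hy with h | h | h | h <;> rw [h] <;> constructor <;> linarith
  -- M bounds
  have hMa : |(U u (ya i * q) - U u q)/A n u - gfun (ya i) (γ u)| ≤ η i :=
    le_trans (hMi u hu (ya i) (hmem _ (by left; rfl))) hel
  have hMb : |(U s (yb i * q) - U s q)/A n s - gfun (yb i) (γ s)| ≤ η i :=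
    le_trans (hMi s hs (yb i) (hmem _ (by right; left; rfl))) hel
  have hMc : |(U s (yc i * q) - U s q)/A n s - gfun (yc i) (γ s)| ≤ η i :=
    le_trans (hMi s hs (yc i) (hmem _ (by right; right; left; rfl))) hel
  have hMd : |(U u (yd i * q) - U u q)/A n u - gfun (yd i) (γ u)| ≤ η i :=
    le_trans (hMi u hu (yd i) (hmem _ (by right; right; right; rfl))) hel
  -- S bounds
  have hSbound : ∀ (s' u' : ℝ), s' ∈ Icc (0:ℝ) 1 → u' ∈ Icc (0:ℝ) 1 → |s' - u'| ≤ δ n →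
      ∀ g : ℝ, 0 < g → min (1/(ya i) - 1/(yb i)) (1/(yc i) - 1/(yd i)) ≤ g →
      (P {ω | ep i * lam n < |X ω s' - X ω u'| / A n u' ∧
          U u' q + τ * A n u' < X ω u'}).toReal ≤ g/2 * (1/q) := by
    intro s' u' hs' hu' hd' g hg hming
    have h0 := hSi s' hs' u' hu' hd'
    have h1 : lam n * (k n : ℝ) / n ≤ C * (1/q) := by
      rw [mul_div_assoc, hkq]
      have : 0 ≤ 1/q := by positivity
      exact mul_le_mul_of_nonneg_right (hlamC n) this
    have h2 : ep' i * (lam n * (k n : ℝ) / n) ≤ ep' i * (C * (1/q)) :=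
      mul_le_mul_of_nonneg_left h1 (le_of_lt (hep'0 i))
    have h3 : ep' i * (C * (1/q)) ≤ g/2 * (1/q) := by
      rw [hep']
      have hq1 : (0:ℝ) ≤ 1/q := by positivity
      have : min (1/(ya i) - 1/(yb i)) (1/(yc i) - 1/(yd i)) / (2*C) * (C * (1/q))
          = min (1/(ya i) - 1/(yb i)) (1/(yc i) - 1/(yd i)) / 2 * (1/q) := by
        field_simp
      rw [this]
      have hmin2 : min (1/(ya i) - 1/(yb i)) (1/(yc i) - 1/(yd i)) / 2 ≤ g/2 := by linarith
      exact mul_le_mul_of_nonneg_right hmin2 hq1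
    linarith
  -- core step 1 : target u at level ya, witness s at level yb
  have hglo1 : τ + 3*(η i) ≤ gfun (ya i) (γ u) := by
    have h1 := (abs_le.mp locu1).1
    linarith [n1 i]
  have hSb1 : (P {ω | ep i * lam n < |X ω s - X ω u| / A n u ∧
      U u q + τ * A n u < X ω u}).toReal ≤ (1/(ya i) - 1/(yb i))/2 * (1/q) :=
    hSbound s u hs hu hsu _ (by linarith [hgap1 i]) (min_le_left _ _)
  have hα := core_step P (fun ω => X ω s) (fun ω => X ω u) (hXmeas s) (hXmeas u)
    q (ya i) (yb i) (η i) (ep i * lam n) τ (A n u) (A n s)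
    (U u q) (U u (ya i * q)) (U s q) (U s (yb i * q))
    (gfun (ya i) (γ u)) (gfun (yb i) (γ s))
    hq0 hyaq hybq (hya0 i) (hyb0 i) (hgap1 i) hAu hAs (hη0 i) hel
    (hUF u (ya i * q)) (hUF s (yb i * q)) hMa hMb hglo1 hSb1
  -- core step 2 : target s at level yc, witness u at level yd
  have hglo2 : τ + 3*(η i) ≤ gfun (yc i) (γ s) := by
    have h1 := (abs_le.mp locs3).1
    have := n2 i
    have := hμ0 i
    have := hη0 i
    linarith [n1 i]
  have hSb2 : (P {ω | ep i * lam n < |X ω u - X ω s| / A n s ∧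
      U s q + τ * A n s < X ω s}).toReal ≤ (1/(yc i) - 1/(yd i))/2 * (1/q) := by
    have habs : |u - s| ≤ δ n := by rwa [abs_sub_comm]
    exact hSbound u s hu hs habs _ (by linarith [hgap2 i]) (min_le_right _ _)
  have hβ := core_step P (fun ω => X ω u) (fun ω => X ω s) (hXmeas u) (hXmeas s)
    q (yc i) (yd i) (η i) (ep i * lam n) τ (A n s) (A n u)
    (U s q) (U s (yc i * q)) (U u q) (U u (yd i * q))
    (gfun (yc i) (γ s)) (gfun (yd i) (γ u))
    hq0 hycq hydq (hyc0 i) (hyd0 i) (hgap2 i) hAs hAu (hη0 i) hel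
    (hUF s (yc i * q)) (hUF u (yd i * q)) hMc hMd hglo2 hSb2
  -- combine
  exact final_algebra τ τt (v₁ i) (v₃ i) (η i) (μ i)
    (gfun (ya i) (γ u)) (gfun (yb i) (γ s)) (gfun (yc i) (γ s)) (gfun (yd i) (γ u))
    (A n u) (A n s) (U u q) (U s q)
    hττt hAu hAs (hη0 i) (hμ0 i) (n1 i) (n2 i) (n3 i)
    (by have := (abs_le.mp locu1).1; linarith) locs2
    (by have := (abs_le.mp locs3).1; linarith) locu4
    hα hβ
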